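/- For any vector a in S_even with nonempty a, any even integers m and n, and any natural numbers p and q, the iterated two-connector alternating construction satisfies (a^{2p+1}_{m,n})^{2q+1}_{m,n} = a^{(2p+1)(2q+1)}_{m,n}. -/

import Mathlib

/-- `a` is an expanded even vector of even length: each entry is `-2`, `0`, or `2`,
the length is even, the first and last entries are nonzero, and every zero entry is
flanked by equal nonzero entries. -/
def SEven (a : List ℤ) : Prop :=
  Even a.length ∧ (∀ x ∈ a, x = -2 ∨ x = 0 ∨ x = 2) ∧
    (∀ x, a.head? = some x → x ≠ 0) ∧ (∀ x, a.getLast? = some x → x ≠ 0) ∧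
    (∀ i : ℕ, a[i]? = some 0 →
      ∃ x, x ≠ 0 ∧ a[i - 1]? = some x ∧ a[i + 1]? = some x)

/-- The number of sign changes in `a`: pairs of consecutive nonzero entries
(zeros skipped) with opposite signs. -/
def signChanges (a : List ℤ) : ℕ :=
  let nz := a.filter (· ≠ 0)
  (nz.zip nz.tail).countP (fun p => p.1 * p.2 < 0)

/-- `cr a` = sum of absolute values of entries of `a` minus the number of sign changes. -/
def cr (a : List ℤ) : ℕ := (a.map Int.natAbs).sum - signChanges a

/-- The connector vector of an even integer `c`: `(0)` if `c = 0`, and otherwise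
`±(2, 0, 2, 0, ..., 2)` with entries summing to `c`. -/
def cvec (c : ℤ) : List ℤ :=
  if c = 0 then [0]
  else (List.range (c.natAbs - 1)).map
    (fun i => if i % 2 = 0 then (if 0 < c then 2 else -2) else 0)

/-- `altpow a m n k` is the two-connector alternating vector
`a^{2k+1}_{m,n} = (a, m, a⁻¹, n, a, m, a⁻¹, n, ..., a)` with `2k+1` alternating
copies of `a` and its reverse, separated by alternating connectors `m` and `n`. -/
def altpow (a : List ℤ) (m n : ℤ) : ℕ → List ℤ
  | 0 => a
  | k + 1 => altpow a m n k ++ cvec m ++ a.reverse ++ cvec n ++ a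

lemma cvec_reverse {c : ℤ} (hc : Even c) : (cvec c).reverse = cvec c := by
  unfold cvec
  split
  · rfl
  · rename_i h
    have hA : c.natAbs % 2 = 0 := by
      obtain ⟨r, hr⟩ := Int.natAbs_even.mpr hc
      omega
    have hA1 : 0 < c.natAbs := Int.natAbs_pos.mpr h
    apply List.ext_getElem
    · simp
    · intro i h1 h2
      simp only [List.length_map, List.length_range] at h2
      rw [List.getElem_reverse]
      simp only [List.getElem_map, List.getElem_range, List.length_map, List.length_range]
      have hp : (c.natAbs - 1 - 1 - i) % 2 = i % 2 := by omega
      rw [hp]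

lemma L1 {a : List ℤ} {m n : ℤ} (hm : Even m) (hn : Even n) (r : List ℤ) (j k : ℕ) :
    altpow a m n j ++ (cvec m ++ ((altpow a m n k).reverse ++ r)) =
      altpow a m n (j + k) ++ (cvec m ++ (a.reverse ++ r)) := by
  induction k generalizing j with
  | zero => simp [altpow]
  | succ k ih =>
    have step : altpow a m n j ++ (cvec m ++ ((altpow a m n (k+1)).reverse ++ r)) =
        altpow a m n (j+1) ++ (cvec m ++ ((altpow a m n k).reverse ++ r)) := by
      simp [altpow, cvec_reverse hm, cvec_reverse hn, List.append_assoc]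
    rw [step, ih (j+1)]
    congr 2
    omega

lemma L2 {a : List ℤ} {m n : ℤ} (j : ℕ) : ∀ l : ℕ,
    altpow a m n j ++ (cvec m ++ (a.reverse ++ (cvec n ++ altpow a m n l))) =
      altpow a m n (j + l + 1) := by
  intro l
  induction l with
  | zero => simp [altpow]
  | succ l ih =>
    have step : altpow a m n j ++ (cvec m ++ (a.reverse ++ (cvec n ++ altpow a m n (l+1)))) =
        (altpow a m n j ++ (cvec m ++ (a.reverse ++ (cvec n ++ altpow a m n l))))
          ++ cvec m ++ a.reverse ++ cvec n ++ a := by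
      simp [altpow, List.append_assoc]
    rw [step, ih]
    rfl

theorem altpow_altpow (a : List ℤ) (ha : a ≠ []) (haS : SEven a)
    (m n : ℤ) (hm : Even m) (hn : Even n) (p q : ℕ) :
    altpow (altpow a m n p) m n q = altpow a m n (2 * p * q + p + q) := by
  induction q with
  | zero =>
    show altpow a m n p = altpow a m n (2 * p * 0 + p + 0)
    norm_num
  | succ q ih =>
    show altpow (altpow a m n p) m n q ++ cvec m ++ (altpow a m n p).reverse
        ++ cvec n ++ altpow a m n p = _
    rw [ih]
    have h1 := L1 (a := a) hm hn (cvec n ++ altpow a m n p) (2 * p * q + p + q) p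
    have h2 := L2 (a := a) (m := m) (n := n) (2 * p * q + p + q + p) p
    have key : altpow a m n (2 * p * q + p + q) ++ cvec m ++ (altpow a m n p).reverse
        ++ cvec n ++ altpow a m n p =
        altpow a m n (2 * p * q + p + q + p + p + 1) := by
      simp only [List.append_assoc]
      rw [h1, h2]
    rw [key]
    congr 1
    ring
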